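/- arXiv:1307.2275 — 3 statements merged into one kernel-verified Lean document; each statement's English description precedes it below -/
import Mathlib

section
/- Let d ≥ 1, γ > 0, T > 0, and let f ∈ C¹(ℝ^d × [0,T]) be nonnegative and satisfy pointwise ∂_τ f(v,τ) = div_v(v f(v,τ)(1 + f(v,τ)^γ)). Define, for t ∈ [0, (e^{dγT} − 1)/(dγ)], τ(t) = (dγ)^{-1} log(1 + dγ t) and ρ(x,t) = e^{−d τ(t)} f(e^{−τ(t)} x, τ(t)). Then ρ is C¹ and satisfies pointwise ∂_t ρ(x,t) − div_x(x ρ(x,t)^{1+γ}) = 0, with ρ(·,0) = f(·,0). -/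
open Real Set

/-- The divergence of a vector field `V : ℝ^d → ℝ^d` at a point, as the trace of its
(Fréchet) derivative. -/
noncomputable def diverg {d : ℕ} (V : EuclideanSpace ℝ (Fin d) → EuclideanSpace ℝ (Fin d))
    (v : EuclideanSpace ℝ (Fin d)) : ℝ :=
  LinearMap.trace ℝ (EuclideanSpace ℝ (Fin d)) (fderiv ℝ V v).toLinearMap

lemma diverg_smul_field {d : ℕ} {g : EuclideanSpace ℝ (Fin d) → ℝ}
    {L : EuclideanSpace ℝ (Fin d) →L[ℝ] ℝ} {v : EuclideanSpace ℝ (Fin d)}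
    (hg : HasFDerivAt g L v) :
    diverg (fun w => g w • w) v = d * g v + L v := by
  have hD : HasFDerivAt (fun w => g w • w)
      (g v • ContinuousLinearMap.id ℝ (EuclideanSpace ℝ (Fin d)) + L.smulRight v) v :=
    hg.smul (hasFDerivAt_id v)
  rw [diverg, hD.fderiv]
  have h1 : ((g v • ContinuousLinearMap.id ℝ (EuclideanSpace ℝ (Fin d)) +
      L.smulRight v)).toLinearMap =
      g v • LinearMap.id + (LinearMap.toSpanSingleton ℝ _ v) ∘ₗ (L : _ →ₗ[ℝ] ℝ) := by
    ext w
    simp [LinearMap.toSpanSingleton, LinearMap.smulRight]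
  rw [h1, map_add, LinearMap.map_smul, LinearMap.trace_id, LinearMap.trace_comp_comm']
  have h2 : ((L : _ →ₗ[ℝ] ℝ) ∘ₗ LinearMap.toSpanSingleton ℝ _ v) = L v • LinearMap.id := by
    ext r
    simp [LinearMap.toSpanSingleton, mul_comm]
  rw [h2, LinearMap.map_smul, LinearMap.trace_id]
  simp [finrank_euclideanSpace_fin, smul_eq_mul, mul_comm]

/-- The time-dependent mass-preserving scaling `ρ(x,t) = e^{−dτ(t)} f(e^{−τ(t)}x, τ(t))`,
`τ(t) = (dγ)⁻¹ log(1+dγt)`, transforms a nonnegative `C¹` solution of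
`∂_τ f = div_v(v f(1+f^γ))` into a `C¹` solution of `∂_t ρ − div_x(x ρ^{1+γ}) = 0`
with `ρ(·,0) = f(·,0)`. -/
theorem scaling_removes_linear_drift (d : ℕ) (hd : 1 ≤ d) (γ : ℝ) (hγ : 0 < γ)
    (T : ℝ) (hT : 0 < T) (f : EuclideanSpace ℝ (Fin d) × ℝ → ℝ)
    (hC1 : ContDiffOn ℝ 1 f (univ ×ˢ Icc 0 T))
    (hnn : ∀ p, 0 ≤ f p)
    (hpde : ∀ v : EuclideanSpace ℝ (Fin d), ∀ τ ∈ Icc (0:ℝ) T,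
      derivWithin (fun s => f (v, s)) (Icc 0 T) τ =
        diverg (fun w => (f (w, τ) * (1 + f (w, τ) ^ γ)) • w) v) :
    let T' : ℝ := (Real.exp ((d:ℝ)*γ*T) - 1) / ((d:ℝ)*γ)
    let τof : ℝ → ℝ := fun t => ((d:ℝ)*γ)⁻¹ * Real.log (1 + (d:ℝ)*γ*t)
    let ρ : EuclideanSpace ℝ (Fin d) × ℝ → ℝ :=
      fun p => Real.exp (-((d:ℝ) * τof p.2)) * f (Real.exp (-(τof p.2)) • p.1, τof p.2)
    ContDiffOn ℝ 1 ρ (univ ×ˢ Icc 0 T') ∧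
    (∀ x, ρ (x, 0) = f (x, 0)) ∧
    (∀ x : EuclideanSpace ℝ (Fin d), ∀ t ∈ Icc (0:ℝ) T',
      derivWithin (fun s => ρ (x, s)) (Icc 0 T') t
        - diverg (fun y => ((ρ (y, t)) ^ (1+γ)) • y) x = 0) := by
  intro T' τof ρ
  set S : Set (EuclideanSpace ℝ (Fin d) × ℝ) := univ ×ˢ Icc 0 T with hS
  set c : ℝ := (d:ℝ) * γ with hcdef
  have hd0 : (0:ℝ) < d := by exact_mod_cast Nat.lt_of_lt_of_le Nat.zero_lt_one hd
  have hc : (0:ℝ) < c := mul_pos hd0 hγ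
  have hT' : 0 < T' := by
    have h1 := Real.add_one_lt_exp (ne_of_gt (mul_pos hc hT))
    have h2 : (0:ℝ) < Real.exp (c * T) - 1 := by nlinarith [mul_pos hc hT]
    exact div_pos h2 hc
  have hpos : ∀ t ∈ Icc (0:ℝ) T', (0:ℝ) < 1 + c * t := by
    intro t ht
    nlinarith [ht.1, hc]
  have hmap : ∀ t ∈ Icc (0:ℝ) T', τof t ∈ Icc (0:ℝ) T := by
    intro t ht
    have h1 : (1:ℝ) ≤ 1 + c * t := by nlinarith [ht.1, hc]
    constructor
    · exact mul_nonneg (inv_nonneg.mpr hc.le) (Real.log_nonneg h1)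
    · have h2 : 1 + c * t ≤ Real.exp (c * T) := by
        have : c * t ≤ c * T' := mul_le_mul_of_nonneg_left ht.2 hc.le
        have hcT' : c * T' = Real.exp (c * T) - 1 := by
          show c * ((Real.exp (c * T) - 1) / c) = _
          field_simp
        nlinarith
      have h3 : Real.log (1 + c * t) ≤ c * T := by
        rw [← Real.log_exp (c * T)]
        exact Real.log_le_log (hpos t ht) h2
      calc τof t = c⁻¹ * Real.log (1 + c * t) := rfl
        _ ≤ c⁻¹ * (c * T) := mul_le_mul_of_nonneg_left h3 (inv_nonneg.mpr hc.le)
        _ = T := by field_simp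
  have hexp : ∀ t ∈ Icc (0:ℝ) T', Real.exp (c * τof t) = 1 + c * t := by
    intro t ht
    have : c * τof t = Real.log (1 + c * t) := by
      show c * (c⁻¹ * Real.log (1 + c * t)) = _
      field_simp
    rw [this, Real.exp_log (hpos t ht)]
  have hτd : ∀ t ∈ Icc (0:ℝ) T', HasDerivAt τof ((1 + c * t)⁻¹) t := by
    intro t ht
    have h1 : HasDerivAt (fun s : ℝ => 1 + c * s) c t := by
      simpa using ((hasDerivAt_id t).const_mul c).const_add 1
    have h2 : HasDerivAt (fun s : ℝ => Real.log (1 + c * s)) ((1 + c * t)⁻¹ * c) t :=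
      by have := (Real.hasDerivAt_log (ne_of_gt (hpos t ht))).comp t h1; exact this
    have h3 := h2.const_mul c⁻¹
    rw [show c⁻¹ * ((1 + c * t)⁻¹ * c) = (1 + c * t)⁻¹ by
      rw [mul_comm _ c, ← mul_assoc, inv_mul_cancel₀ hc.ne', one_mul]] at h3
    exact h3
  -- the spatial Fréchet derivative of f
  have hspace : ∀ (w : EuclideanSpace ℝ (Fin d)) (σ : ℝ), σ ∈ Icc (0:ℝ) T →
      HasFDerivAt (fun u => f (u, σ))
        ((fderivWithin ℝ f S (w, σ)).comp (ContinuousLinearMap.inl ℝ (EuclideanSpace ℝ (Fin d)) ℝ)) w := by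
    intro w σ hσ
    have hf := (hC1.differentiableOn one_ne_zero (w, σ) ⟨mem_univ w, hσ⟩).hasFDerivWithinAt
    have hg : HasFDerivAt (fun u : EuclideanSpace ℝ (Fin d) => ((u, σ) : EuclideanSpace ℝ (Fin d) × ℝ))
        (ContinuousLinearMap.inl ℝ (EuclideanSpace ℝ (Fin d)) ℝ) w :=
      (hasFDerivAt_id w).prodMk (hasFDerivAt_const σ w)
    rw [← hasFDerivWithinAt_univ] at hg ⊢
    exact hf.comp w hg (fun u _ => Set.mk_mem_prod (mem_univ _) hσ)
  -- the time derivative of f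
  have htime : ∀ (w : EuclideanSpace ℝ (Fin d)) (σ : ℝ), σ ∈ Icc (0:ℝ) T →
      derivWithin (fun s => f (w, s)) (Icc 0 T) σ =
        (fderivWithin ℝ f S (w, σ)) (0, 1) := by
    intro w σ hσ
    have hf := (hC1.differentiableOn one_ne_zero (w, σ) ⟨mem_univ w, hσ⟩).hasFDerivWithinAt
    have hmk : HasDerivWithinAt (fun s : ℝ => ((w, s) : EuclideanSpace ℝ (Fin d) × ℝ)) ((0 : EuclideanSpace ℝ (Fin d)), (1:ℝ))
        (Icc 0 T) σ := (((hasDerivAt_const σ w).prodMk (hasDerivAt_id σ))).hasDerivWithinAt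
    have := hf.comp_hasDerivWithinAt σ hmk (fun s hs => ⟨mem_univ _, hs⟩)
    exact this.derivWithin (uniqueDiffOn_Icc hT σ hσ)
  -- scalar form of the PDE
  have hpde' : ∀ (w : EuclideanSpace ℝ (Fin d)) (σ : ℝ), σ ∈ Icc (0:ℝ) T →
      (fderivWithin ℝ f S (w, σ)) (0, 1) =
        d * (f (w, σ) + f (w, σ) ^ (1+γ)) +
          (1 + (1+γ) * f (w, σ) ^ γ) * (fderivWithin ℝ f S (w, σ)) (w, 0) := by
    intro w σ hσ
    have key := hpde w σ hσ
    rw [htime w σ hσ] at key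
    set L := fderivWithin ℝ f S (w, σ) with hL
    have hFd : HasFDerivAt (fun u => f (u, σ)) (L.comp (ContinuousLinearMap.inl ℝ (EuclideanSpace ℝ (Fin d)) ℝ)) w :=
      hspace w σ hσ
    have hrw : (fun u : EuclideanSpace ℝ (Fin d) => (f (u, σ) * (1 + f (u, σ) ^ γ)) • u) =
        fun u => (f (u, σ) + f (u, σ) ^ (1+γ)) • u := by
      funext u
      congr 1
      rw [Real.rpow_add' (hnn (u, σ)) (by positivity), Real.rpow_one]
      ring
    have hg : HasFDerivAt (fun u : EuclideanSpace ℝ (Fin d) => f (u, σ) + f (u, σ) ^ (1+γ))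
        ((L.comp (ContinuousLinearMap.inl ℝ (EuclideanSpace ℝ (Fin d)) ℝ)) +
          ((1+γ) * f (w, σ) ^ ((1+γ)-1)) • (L.comp (ContinuousLinearMap.inl ℝ (EuclideanSpace ℝ (Fin d)) ℝ))) w :=
      hFd.add (hFd.rpow_const (Or.inr (by linarith)))
    rw [hrw] at key
    rw [diverg_smul_field hg] at key
    have hexp1 : (1+γ) - 1 = γ := by ring
    rw [hexp1] at key
    rw [key]
    simp [smul_eq_mul]
    ring
  refine ⟨?_, ?_, ?_⟩
  · -- ContDiffOn
    have hbase : ContDiffOn ℝ 1 (fun t : ℝ => 1 + c * t) (Icc 0 T') :=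
      ((contDiff_const.add (contDiff_const.mul contDiff_id))).contDiffOn
    have hτC : ContDiffOn ℝ 1 τof (Icc 0 T') := by
      have := hbase.log (fun t ht => ne_of_gt (hpos t ht))
      exact contDiffOn_const.mul this
    have hΨ : ContDiffOn ℝ 1 (fun p : EuclideanSpace ℝ (Fin d) × ℝ => τof p.2) (univ ×ˢ Icc 0 T') :=
      hτC.comp contDiffOn_snd (fun p hp => hp.2)
    have h1 : ContDiffOn ℝ 1 (fun p : EuclideanSpace ℝ (Fin d) × ℝ => Real.exp (-((d:ℝ) * τof p.2)))
        (univ ×ˢ Icc 0 T') := ((contDiffOn_const.mul hΨ).neg).exp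
    have hΦ : ContDiffOn ℝ 1 (fun p : EuclideanSpace ℝ (Fin d) × ℝ => ((Real.exp (-(τof p.2)) • p.1, τof p.2) : EuclideanSpace ℝ (Fin d) × ℝ))
        (univ ×ˢ Icc 0 T') := ((hΨ.neg.exp).smul contDiffOn_fst).prodMk hΨ
    have h2 : ContDiffOn ℝ 1 (fun p : EuclideanSpace ℝ (Fin d) × ℝ => f (Real.exp (-(τof p.2)) • p.1, τof p.2))
        (univ ×ˢ Icc 0 T') :=
      hC1.comp hΦ (fun p hp => ⟨mem_univ _, hmap p.2 hp.2⟩)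
    exact h1.mul h2
  · -- initial condition
    intro x
    have h0 : τof 0 = 0 := by
      show c⁻¹ * Real.log (1 + c * 0) = 0
      simp
    show Real.exp (-((d:ℝ) * τof 0)) * f (Real.exp (-(τof 0)) • x, τof 0) = f (x, 0)
    rw [h0]
    simp
  · -- the PDE for ρ
    intro x t ht
    have hτ : τof t ∈ Icc (0:ℝ) T := hmap t ht
    set τ : ℝ := τof t with hτdef
    set a : ℝ := Real.exp (-τ) with hadef
    set A : ℝ := Real.exp (-((d:ℝ) * τ)) with hAdef
    set b : ℝ := (1 + c * t)⁻¹ with hbdef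
    set L := fderivWithin ℝ f S (a • x, τ) with hLdef
    -- time derivative of ρ
    have hτt : HasDerivAt τof b t := hτd t ht
    have m1 : HasDerivAt (fun s => Real.exp (-((d:ℝ) * τof s))) (A * (-((d:ℝ) * b))) t := by
      have := (((hτt.const_mul (d:ℝ))).neg).exp
      simpa [hAdef, mul_comm] using this
    have hsm : HasDerivAt (fun s => Real.exp (-(τof s)) • x) ((a * -b) • x) t := by
      have h0 : HasDerivAt (fun s => Real.exp (-(τof s))) (a * -b) t := by
        have := (hτt.neg).exp
        simpa [hadef] using this
      exact h0.smul_const x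
    have hpair : HasDerivAt
        (fun s => ((Real.exp (-(τof s)) • x, τof s) : EuclideanSpace ℝ (Fin d) × ℝ))
        (((a * -b) • x, b)) t := hsm.prodMk hτt
    have hf := (hC1.differentiableOn one_ne_zero (a • x, τ) ⟨mem_univ _, hτ⟩).hasFDerivWithinAt
    rw [← hLdef] at hf
    have hcomp : HasDerivWithinAt (fun s => f (Real.exp (-(τof s)) • x, τof s))
        (L ((a * -b) • x, b)) (Icc 0 T') t :=
      hf.comp_hasDerivWithinAt t hpair.hasDerivWithinAt (fun s hs => Set.mk_mem_prod (mem_univ _) (hmap s hs))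
    have hρt : HasDerivWithinAt (fun s => ρ (x, s))
        ((A * (-((d:ℝ) * b))) * f (a • x, τ) + A * (L ((a * -b) • x, b))) (Icc 0 T') t := by
      have := (m1.hasDerivWithinAt).mul hcomp
      exact this
    have hDW : derivWithin (fun s => ρ (x, s)) (Icc 0 T') t =
        (A * (-((d:ℝ) * b))) * f (a • x, τ) + A * (L ((a * -b) • x, b)) :=
      hρt.derivWithin (uniqueDiffOn_Icc hT' t ht)
    -- divergence side
    have hFdv : HasFDerivAt (fun u => f (u, τ))
        (L.comp (ContinuousLinearMap.inl ℝ (EuclideanSpace ℝ (Fin d)) ℝ)) (a • x) :=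
      hspace (a • x) τ hτ
    have hlin : HasFDerivAt (fun y : EuclideanSpace ℝ (Fin d) => a • y)
        (a • ContinuousLinearMap.id ℝ (EuclideanSpace ℝ (Fin d))) x :=
      (hasFDerivAt_id x).const_smul a
    have hinner : HasFDerivAt (fun y : EuclideanSpace ℝ (Fin d) => A * f (a • y, τ))
        (A • ((L.comp (ContinuousLinearMap.inl ℝ (EuclideanSpace ℝ (Fin d)) ℝ)).comp
          (a • ContinuousLinearMap.id ℝ (EuclideanSpace ℝ (Fin d))))) x := by
      have := (hFdv.comp x hlin).const_mul A
      simpa using this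
    have hg : HasFDerivAt (fun y : EuclideanSpace ℝ (Fin d) => (A * f (a • y, τ)) ^ (1+γ))
        (((1+γ) * (A * f (a • x, τ)) ^ ((1+γ)-1)) •
          (A • ((L.comp (ContinuousLinearMap.inl ℝ (EuclideanSpace ℝ (Fin d)) ℝ)).comp
            (a • ContinuousLinearMap.id ℝ (EuclideanSpace ℝ (Fin d)))))) x :=
      hinner.rpow_const (Or.inr (by linarith))
    have hdd : diverg (fun y => (ρ (y, t)) ^ (1+γ) • y) x =
        (d : ℝ) * ((A * f (a • x, τ)) ^ (1+γ)) +
          ((1+γ) * (A * f (a • x, τ)) ^ ((1+γ)-1)) * (A * (a * L (x, 0))) := by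
      have h := diverg_smul_field hg
      have hGsm : L ((a • x), (0:ℝ)) = a * L (x, 0) := by
        have : ((a • x, (0:ℝ)) : EuclideanSpace ℝ (Fin d) × ℝ) = a • ((x, (0:ℝ))) := by
          simp [Prod.smul_mk]
        rw [this, map_smul, smul_eq_mul]
      have happ : (((1+γ) * (A * f (a • x, τ)) ^ ((1+γ)-1)) •
          (A • ((L.comp (ContinuousLinearMap.inl ℝ (EuclideanSpace ℝ (Fin d)) ℝ)).comp
            (a • ContinuousLinearMap.id ℝ (EuclideanSpace ℝ (Fin d)))))) x =
          ((1+γ) * (A * f (a • x, τ)) ^ ((1+γ)-1)) * (A * (a * L (x, 0))) := by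
        simp [smul_eq_mul, hGsm]
      rw [happ] at h
      exact h
    -- decompose the applied derivative on the time side
    have hu : L ((a * -b) • x, b) = (a * -b) * L (x, 0) + b * L (0, 1) := by
      have : (((a * -b) • x, b) : EuclideanSpace ℝ (Fin d) × ℝ) =
          (a * -b) • ((x, (0:ℝ))) + b • (((0 : EuclideanSpace ℝ (Fin d)), (1:ℝ))) := by
        apply Prod.ext <;> simp
      rw [this, map_add, map_smul, map_smul, smul_eq_mul, smul_eq_mul]
    -- the PDE for f at (a • x, τ)
    have hfpde : L (0, 1) = (d : ℝ) * (f (a • x, τ) + f (a • x, τ) ^ (1+γ)) +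
        (1 + (1+γ) * f (a • x, τ) ^ γ) * (a * L (x, 0)) := by
      have h := hpde' (a • x) τ hτ
      have hGsm : L ((a • x), (0:ℝ)) = a * L (x, 0) := by
        have : ((a • x, (0:ℝ)) : EuclideanSpace ℝ (Fin d) × ℝ) = a • ((x, (0:ℝ))) := by
          simp [Prod.smul_mk]
        rw [this, map_smul, smul_eq_mul]
      rw [hGsm] at h
      exact h
    -- exponential identities
    have e1 : Real.exp (-(c * τ)) = b := by
      rw [hτdef, Real.exp_neg, hexp t ht, hbdef]
    have eAγ : A ^ γ = b := by
      rw [hAdef, ← Real.exp_mul, ← e1]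
      congr 1
      rw [hcdef]; ring
    have eA1γ : A ^ (1+γ) = A * b := by
      rw [hAdef, ← Real.exp_mul, ← e1, ← Real.exp_add]
      congr 1
      rw [hcdef]; ring
    have hA0 : (0:ℝ) ≤ A := by rw [hAdef]; positivity
    have e2 : (A * f (a • x, τ)) ^ (1+γ) = A ^ (1+γ) * f (a • x, τ) ^ (1+γ) :=
      Real.mul_rpow hA0 (hnn _)
    have e3 : (A * f (a • x, τ)) ^ γ = A ^ γ * f (a • x, τ) ^ γ :=
      Real.mul_rpow hA0 (hnn _)
    have hexp1 : (1+γ) - 1 = γ := by ring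
    rw [hDW, hdd, hu, hfpde, hexp1, e2, e3, eAγ, eA1γ]
    ring
end

section
/- Let γ > 0, T > 0, and let ρ ∈ C¹(ℝ × [0,T]) be a nonnegative bounded solution of ∂_t ρ − ∂_x(x ρ^{1+γ}) = 0, with ρ(·,t) integrable for each t. Define u(ξ,t) = (γ|ξ|)^{1/γ} ρ(sign(ξ)(γ|ξ|)^{(1+γ)/γ}/(1+γ), t). Then for every ξ ≠ 0 and t ∈ (0,T), u satisfies pointwise ∂_t u − sign(ξ) ∂_ξ(u^{1+γ}/(1+γ)) = 0, and for every t, ∫_0^∞ u(ξ,t) dξ = ∫_0^∞ ρ(x,t) dx and ∫_{−∞}^0 u(ξ,t) dξ = ∫_{−∞}^0 ρ(x,t) dx. -/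
open Real Set MeasureTheory

lemma aux_hasDerivAt_pos (γ : ℝ) (hγ : 0 < γ) {ξ : ℝ} (hξ : 0 < ξ) :
    HasDerivAt (fun η : ℝ => (γ*η)^((1+γ)/γ)/(1+γ)) ((γ*ξ)^(1/γ)) ξ := by
  have hbase : (0:ℝ) < γ*ξ := mul_pos hγ hξ
  have h1 : HasDerivAt (fun η : ℝ => γ*η) γ ξ := by
    simpa using (hasDerivAt_id ξ).const_mul γ
  have h2 := (Real.hasDerivAt_rpow_const (p := (1+γ)/γ) (Or.inl hbase.ne')).comp ξ h1
  have h3 := h2.div_const (1+γ)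
  refine h3.congr_deriv ?_
  have hexp : (1+γ)/γ - 1 = 1/γ := by field_simp; ring
  rw [hexp]
  have h1γ : (1:ℝ)+γ ≠ 0 := by positivity
  field_simp

lemma aux_hasDerivAt_neg (γ : ℝ) (hγ : 0 < γ) {ξ : ℝ} (hξ : ξ < 0) :
    HasDerivAt (fun η : ℝ => -((γ*(-η))^((1+γ)/γ)/(1+γ))) ((γ*(-ξ))^(1/γ)) ξ := by
  have hbase : (0:ℝ) < γ*(-ξ) := mul_pos hγ (by linarith)
  have h1 : HasDerivAt (fun η : ℝ => γ*(-η)) (-γ) ξ := by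
    simpa using ((hasDerivAt_id ξ).neg).const_mul γ
  have h2 := (Real.hasDerivAt_rpow_const (p := (1+γ)/γ) (Or.inl hbase.ne')).comp ξ h1
  have h3 := (h2.div_const (1+γ)).neg
  refine h3.congr_deriv ?_
  have hexp : (1+γ)/γ - 1 = 1/γ := by field_simp; ring
  rw [hexp]
  have h1γ : (1:ℝ)+γ ≠ 0 := by positivity
  field_simp

lemma aux_image (γ : ℝ) (hγ : 0 < γ) :
    (fun ξ : ℝ => (γ*ξ)^((1+γ)/γ)/(1+γ)) '' Ioi 0 = Ioi 0 := by
  have h1γ : (0:ℝ) < 1+γ := by linarith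
  apply Subset.antisymm
  · rintro x ⟨ξ, hξ, rfl⟩
    exact div_pos (Real.rpow_pos_of_pos (mul_pos hγ hξ) _) h1γ
  · intro x hx
    refine ⟨((1+γ)*x)^(γ/(1+γ))/γ, div_pos (Real.rpow_pos_of_pos (mul_pos h1γ hx) _) hγ, ?_⟩
    have h1 : γ * (((1+γ)*x)^(γ/(1+γ))/γ) = ((1+γ)*x)^(γ/(1+γ)) := by field_simp
    simp only [h1]
    rw [← Real.rpow_mul (le_of_lt (mul_pos h1γ hx))]
    have h2 : γ/(1+γ) * ((1+γ)/γ) = 1 := by field_simp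
    rw [h2, Real.rpow_one, mul_div_cancel_left₀ x h1γ.ne']

lemma aux_injOn (γ : ℝ) (hγ : 0 < γ) :
    InjOn (fun ξ : ℝ => (γ*ξ)^((1+γ)/γ)/(1+γ)) (Ioi 0) := by
  have h1γ : (0:ℝ) < 1+γ := by linarith
  have : StrictMonoOn (fun ξ : ℝ => (γ*ξ)^((1+γ)/γ)/(1+γ)) (Ioi 0) := by
    intro a ha b hb hab
    have := Real.rpow_lt_rpow (le_of_lt (mul_pos hγ ha))
      (mul_lt_mul_of_pos_left hab hγ) (div_pos h1γ hγ)
    exact div_lt_div_of_pos_right this h1γ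
  exact this.injOn

lemma aux_mass (γ : ℝ) (hγ : 0 < γ) (g : ℝ → ℝ) :
    (∫ ξ in Ioi (0:ℝ), (γ*ξ)^(1/γ) * g ((γ*ξ)^((1+γ)/γ)/(1+γ))) = ∫ x in Ioi (0:ℝ), g x := by
  have h := integral_image_eq_integral_abs_deriv_smul measurableSet_Ioi
    (fun x hx => (aux_hasDerivAt_pos γ hγ hx).hasDerivWithinAt) (aux_injOn γ hγ) g
  rw [aux_image γ hγ] at h
  rw [h]
  refine setIntegral_congr_fun measurableSet_Ioi fun ξ hξ => ?_
  rw [abs_of_nonneg (Real.rpow_nonneg (le_of_lt (mul_pos hγ hξ)) _), smul_eq_mul]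

/-- The change of variables `u(ξ,t) = (γ|ξ|)^{1/γ} ρ(sign(ξ)(γ|ξ|)^{(1+γ)/γ}/(1+γ), t)`
maps a bounded `C¹` solution `ρ` of `∂_t ρ − ∂_x(xρ^{1+γ}) = 0` to a solution of the
conservation law `∂_t u − sign(ξ) ∂_ξ(u^{1+γ}/(1+γ)) = 0`, preserving the mass on each
half-line. -/
theorem change_of_variables_to_conservation_law (γ : ℝ) (hγ : 0 < γ) (T : ℝ) (hT : 0 < T)
    (ρ : ℝ → ℝ → ℝ)
    (hC1 : ContDiffOn ℝ 1 (fun p : ℝ × ℝ => ρ p.1 p.2) (univ ×ˢ Icc 0 T))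
    (hnn : ∀ x t, 0 ≤ ρ x t)
    (hbdd : ∃ C : ℝ, ∀ x t, ρ x t ≤ C)
    (hint : ∀ t ∈ Icc (0:ℝ) T, Integrable (fun x => ρ x t))
    (hpde : ∀ x : ℝ, ∀ t ∈ Icc (0:ℝ) T,
      derivWithin (fun s => ρ x s) (Icc 0 T) t
        - deriv (fun y => y * (ρ y t) ^ (1+γ)) x = 0) :
    let u : ℝ → ℝ → ℝ := fun ξ t =>
      (γ*|ξ|) ^ (1/γ) * ρ (Real.sign ξ * (γ*|ξ|) ^ ((1+γ)/γ) / (1+γ)) t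
    (∀ ξ : ℝ, ξ ≠ 0 → ∀ t ∈ Ioo (0:ℝ) T,
      deriv (fun s => u ξ s) t
        - Real.sign ξ * deriv (fun η => (u η t) ^ (1+γ) / (1+γ)) ξ = 0) ∧
    (∀ t ∈ Icc (0:ℝ) T,
      (∫ ξ in Ioi (0:ℝ), u ξ t) = (∫ x in Ioi (0:ℝ), ρ x t) ∧
      (∫ ξ in Iio (0:ℝ), u ξ t) = (∫ x in Iio (0:ℝ), ρ x t)) := by
  intro u
  constructor
  · intro ξ hξ0 t ht
    simp only [u]
    have htm : t ∈ Icc (0:ℝ) T := ⟨ht.1.le, ht.2.le⟩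
    have hnt : Icc (0:ℝ) T ∈ nhds t := Icc_mem_nhds ht.1 ht.2
    -- joint differentiability
    have hdiff : ∀ x : ℝ, DifferentiableAt ℝ (fun p : ℝ × ℝ => ρ p.1 p.2) (x, t) := by
      intro x
      have hmem : (univ ×ˢ Icc 0 T : Set (ℝ×ℝ)) ∈ nhds (x, t) :=
        prod_mem_nhds Filter.univ_mem hnt
      exact ((hC1.differentiableOn one_ne_zero) (x,t) ⟨mem_univ x, htm⟩).differentiableAt hmem
    have hρx : ∀ x : ℝ, DifferentiableAt ℝ (fun y => ρ y t) x := by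
      intro x
      have h := (hdiff x).comp (f := fun y : ℝ => (y, t)) x (differentiableAt_fun_id.prodMk (differentiableAt_const t))
      exact h
    -- sign square
    have hsq : Real.sign ξ * Real.sign ξ = 1 := by
      rcases lt_or_gt_of_ne hξ0 with h | h
      · rw [Real.sign_of_neg h]; norm_num
      · rw [Real.sign_of_pos h]; norm_num
    -- derivative of the change of variables map
    have hXder : HasDerivAt (fun η : ℝ => Real.sign η * (γ*|η|)^((1+γ)/γ)/(1+γ))
        ((γ*|ξ|)^(1/γ)) ξ := by
      rcases lt_or_gt_of_ne hξ0 with h | h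
      · have h2 : (γ*|ξ|)^(1/γ) = (γ*(-ξ))^(1/γ) := by rw [abs_of_neg h]
        rw [h2]
        refine (aux_hasDerivAt_neg γ hγ h).congr_of_eventuallyEq
          (Filter.eventuallyEq_of_mem (Iio_mem_nhds h) fun η hη => ?_)
        rw [Real.sign_of_neg hη, abs_of_neg hη, neg_one_mul, neg_div]
      · have h2 : (γ*|ξ|)^(1/γ) = (γ*ξ)^(1/γ) := by rw [abs_of_pos h]
        rw [h2]
        refine (aux_hasDerivAt_pos γ hγ h).congr_of_eventuallyEq
          (Filter.eventuallyEq_of_mem (Ioi_mem_nhds h) fun η hη => ?_)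
        rw [Real.sign_of_pos hη, abs_of_pos hη, one_mul]
    set Xξ := Real.sign ξ * (γ*|ξ|)^((1+γ)/γ)/(1+γ) with hXξ
    set c := (γ*|ξ|)^(1/γ) with hc
    -- differentiability of the flux
    have hFd : DifferentiableAt ℝ (fun y => y * (ρ y t)^(1+γ)) Xξ :=
      differentiableAt_fun_id.mul ((hρx Xξ).rpow_const (Or.inr (by linarith)))
    have hcomp : HasDerivAt
        (fun η => (Real.sign η * (γ*|η|)^((1+γ)/γ)/(1+γ))
          * (ρ (Real.sign η * (γ*|η|)^((1+γ)/γ)/(1+γ)) t)^(1+γ))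
        (deriv (fun y => y * (ρ y t)^(1+γ)) Xξ * c) ξ := by
      exact (hFd.hasDerivAt).comp ξ hXder
    -- pointwise identity for the flux
    have hkey : ∀ η : ℝ, η ≠ 0 →
        ((γ*|η|)^(1/γ) * ρ (Real.sign η * (γ*|η|)^((1+γ)/γ)/(1+γ)) t)^(1+γ)/(1+γ)
          = Real.sign η * ((Real.sign η * (γ*|η|)^((1+γ)/γ)/(1+γ))
              * (ρ (Real.sign η * (γ*|η|)^((1+γ)/γ)/(1+γ)) t)^(1+γ)) := by
      intro η hη
      have hsη : Real.sign η * Real.sign η = 1 := by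
        rcases lt_or_gt_of_ne hη with h | h
        · rw [Real.sign_of_neg h]; norm_num
        · rw [Real.sign_of_pos h]; norm_num
      have hb : (0:ℝ) ≤ γ*|η| := mul_nonneg hγ.le (abs_nonneg η)
      rw [Real.mul_rpow (Real.rpow_nonneg hb _) (hnn _ t), ← Real.rpow_mul hb]
      have he : 1/γ*(1+γ) = (1+γ)/γ := by ring
      rw [he]
      set s := Real.sign η
      set B := (γ*|η|)^((1+γ)/γ)
      set C := (ρ (s * B/(1+γ)) t)^(1+γ)
      have h1γ : (1:ℝ)+γ ≠ 0 := by positivity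
      field_simp
      linear_combination (-(B*C))*hsη
    -- eventual equality of the flux functions
    have hueq : (fun η => ((γ*|η|)^(1/γ)
          * ρ (Real.sign η * (γ*|η|)^((1+γ)/γ)/(1+γ)) t)^(1+γ)/(1+γ))
        =ᶠ[nhds ξ] (fun η => Real.sign ξ * ((Real.sign η * (γ*|η|)^((1+γ)/γ)/(1+γ))
            * (ρ (Real.sign η * (γ*|η|)^((1+γ)/γ)/(1+γ)) t)^(1+γ))) := by
      rcases lt_or_gt_of_ne hξ0 with h | h
      · refine Filter.eventuallyEq_of_mem (Iio_mem_nhds h) fun η hη => ?_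
        rw [hkey η (ne_of_lt hη), Real.sign_of_neg hη, Real.sign_of_neg h]
      · refine Filter.eventuallyEq_of_mem (Ioi_mem_nhds h) fun η hη => ?_
        rw [hkey η (ne_of_gt hη), Real.sign_of_pos hη, Real.sign_of_pos h]
    have hd2 : deriv (fun η => ((γ*|η|)^(1/γ)
          * ρ (Real.sign η * (γ*|η|)^((1+γ)/γ)/(1+γ)) t)^(1+γ)/(1+γ)) ξ
        = Real.sign ξ * (deriv (fun y => y * (ρ y t)^(1+γ)) Xξ * c) := by
      rw [hueq.deriv_eq, deriv_const_mul_field, hcomp.deriv]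
    have hd1 : deriv (fun s => c * ρ Xξ s) t
        = c * derivWithin (fun s => ρ Xξ s) (Icc 0 T) t := by
      rw [deriv_const_mul_field, derivWithin_of_mem_nhds hnt]
    rw [hd1, hd2]
    have hp := hpde Xξ t htm
    linear_combination c * hp - (deriv (fun y => y * (ρ y t)^(1+γ)) Xξ * c) * hsq
  · intro t ht
    constructor
    · rw [← aux_mass γ hγ (fun x => ρ x t)]
      refine setIntegral_congr_fun measurableSet_Ioi fun ξ hξ => ?_
      simp only [u]
      rw [Real.sign_of_pos hξ, abs_of_pos hξ, one_mul]
    · have h1 : (∫ ξ in Iio (0:ℝ), u ξ t) = ∫ ξ in Ioi (0:ℝ), u (-ξ) t := by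
        rw [show (∫ ξ in Ioi (0:ℝ), u (-ξ) t) = ∫ ξ in Iic (-(0:ℝ)), u ξ t from
          integral_comp_neg_Ioi 0 (fun ξ => u ξ t), neg_zero, integral_Iic_eq_integral_Iio]
      have h2 : (∫ x in Iio (0:ℝ), ρ x t) = ∫ x in Ioi (0:ℝ), ρ (-x) t := by
        rw [show (∫ x in Ioi (0:ℝ), ρ (-x) t) = ∫ x in Iic (-(0:ℝ)), ρ x t from
          integral_comp_neg_Ioi 0 (fun x => ρ x t), neg_zero, integral_Iic_eq_integral_Iio]
      rw [h1, h2, ← aux_mass γ hγ (fun x => ρ (-x) t)]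
      refine setIntegral_congr_fun measurableSet_Ioi fun ξ hξ => ?_
      simp only [u]
      have hneg : -ξ < 0 := neg_lt_zero.mpr hξ
      rw [Real.sign_of_neg hneg, abs_neg, abs_of_pos hξ, neg_one_mul, neg_div]
end

section
/- Let γ > 0. (a) The function X_A(z,t) = z(1 − γt)^{1/γ} satisfies pointwise ∂_t X (∂_z X)^γ + X = 0 for all z ∈ (0,1) and 0 ≤ t < 1/γ. (b) The function X_B(z,t) = [1 − (γ t)^{1/(1+γ)}(1 − z)^{γ/(1+γ)}]^{(1+γ)/γ} satisfies pointwise ∂_t X (∂_z X)^γ + X = 0 at every (z,t) with z ∈ (0,1), t > 0 and 1 − (γ t)^{1/(1+γ)}(1 − z)^{γ/(1+γ)} > 0. (c) For 0 < t < 1/γ, the two profiles match in a C¹ way at z = 1 − γt: X_A(1−γt, t) = X_B(1−γt, t) and ∂_z X_A(1−γt, t) = ∂_z X_B(1−γt, t) = (1 − γt)^{1/γ}. -/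
open Real

private lemma rpow_comp' {f : ℝ → ℝ} {f' x p : ℝ} (hf : HasDerivAt f f' x) (hx : f x ≠ 0) :
    HasDerivAt (fun y => f y ^ p) (p * f x ^ (p-1) * f') x :=
  (Real.hasDerivAt_rpow_const (Or.inl hx)).comp x hf

private lemma derivA_t (γ z t : ℝ) (h : 0 < 1 - γ*t) :
    HasDerivAt (fun s => z * (1-γ*s) ^ (1/γ)) (z * ((1/γ) * (1-γ*t)^(1/γ-1) * (-γ))) t := by
  have h1 : HasDerivAt (fun s : ℝ => 1 - γ*s) (-γ) t := by
    exact ((hasDerivAt_const t (1:ℝ)).sub ((hasDerivAt_id t).const_mul γ)).congr_deriv (by ring)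
  exact (rpow_comp' h1 h.ne').const_mul z

private lemma derivB_t (γ z t : ℝ) (ht : 0 < γ*t)
    (hu : (1 - (γ*t) ^ (1/(1+γ)) * (1-z) ^ (γ/(1+γ))) ≠ 0) :
    HasDerivAt (fun s => (1 - (γ*s) ^ (1/(1+γ)) * (1-z) ^ (γ/(1+γ))) ^ ((1+γ)/γ))
      ((1+γ)/γ * (1 - (γ*t) ^ (1/(1+γ)) * (1-z) ^ (γ/(1+γ)))^((1+γ)/γ-1) *
        (-(1/(1+γ) * (γ*t)^(1/(1+γ)-1) * γ * (1-z) ^ (γ/(1+γ))))) t := by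
  have h0 : HasDerivAt (fun s : ℝ => γ*s) γ t := by
    simpa using (hasDerivAt_id t).const_mul γ
  have h1 : HasDerivAt (fun s => (γ*s) ^ (1/(1+γ))) (1/(1+γ) * (γ*t)^(1/(1+γ)-1) * γ) t :=
    rpow_comp' h0 ht.ne'
  have h2 : HasDerivAt (fun s => 1 - (γ*s) ^ (1/(1+γ)) * (1-z) ^ (γ/(1+γ)))
      (-(1/(1+γ) * (γ*t)^(1/(1+γ)-1) * γ * (1-z) ^ (γ/(1+γ)))) t := by
    exact ((hasDerivAt_const t (1:ℝ)).sub (h1.mul_const _)).congr_deriv (by ring)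
  exact rpow_comp' h2 hu

private lemma derivB_z (γ z t : ℝ) (hz : 0 < 1-z)
    (hu : (1 - (γ*t) ^ (1/(1+γ)) * (1-z) ^ (γ/(1+γ))) ≠ 0) :
    HasDerivAt (fun w => (1 - (γ*t) ^ (1/(1+γ)) * (1-w) ^ (γ/(1+γ))) ^ ((1+γ)/γ))
      ((1+γ)/γ * (1 - (γ*t) ^ (1/(1+γ)) * (1-z) ^ (γ/(1+γ)))^((1+γ)/γ-1) *
        ((γ*t) ^ (1/(1+γ)) * (γ/(1+γ) * (1-z)^(γ/(1+γ)-1)))) z := by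
  have h0 : HasDerivAt (fun w : ℝ => 1 - w) (-1) z := by
    exact ((hasDerivAt_const z (1:ℝ)).sub (hasDerivAt_id z)).congr_deriv (by ring)
  have h1 : HasDerivAt (fun w => (1-w) ^ (γ/(1+γ))) (γ/(1+γ) * (1-z)^(γ/(1+γ)-1) * (-1)) z :=
    rpow_comp' h0 hz.ne'
  have h2 : HasDerivAt (fun w => 1 - (γ*t) ^ (1/(1+γ)) * (1-w) ^ (γ/(1+γ)))
      ((γ*t) ^ (1/(1+γ)) * (γ/(1+γ) * (1-z)^(γ/(1+γ)-1))) z := by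
    have := (hasDerivAt_const z (1:ℝ)).sub (h1.const_mul ((γ*t) ^ (1/(1+γ))))
    exact this.congr_deriv (by ring)
  exact rpow_comp' h2 hu

/-- The explicit solution of the pseudo-inverse equation `X_t X_z^γ + X = 0` with initial
datum `X(z,0) = z`: (a) `X_A(z,t) = z(1−γt)^{1/γ}` solves the equation on region A;
(b) `X_B(z,t) = [1 − (γt)^{1/(1+γ)}(1−z)^{γ/(1+γ)}]^{(1+γ)/γ}` solves it where the bracket
is positive; (c) for `0 < t < 1/γ` the two profiles match in a `C¹` way at `z = 1 − γt`,
with common derivative `(1−γt)^{1/γ}`. -/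
theorem explicit_pseudo_inverse_solution (γ : ℝ) (hγ : 0 < γ) :
    (∀ z t : ℝ, z ∈ Set.Ioo (0:ℝ) 1 → 0 ≤ t → t < 1/γ →
      deriv (fun s => z * (1-γ*s) ^ (1/γ)) t * (deriv (fun w => w * (1-γ*t) ^ (1/γ)) z) ^ γ
        + z * (1-γ*t) ^ (1/γ) = 0) ∧
    (∀ z t : ℝ, z ∈ Set.Ioo (0:ℝ) 1 → 0 < t →
      0 < 1 - (γ*t) ^ (1/(1+γ)) * (1-z) ^ (γ/(1+γ)) →
      deriv (fun s => (1 - (γ*s) ^ (1/(1+γ)) * (1-z) ^ (γ/(1+γ))) ^ ((1+γ)/γ)) t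
        * (deriv (fun w => (1 - (γ*t) ^ (1/(1+γ)) * (1-w) ^ (γ/(1+γ))) ^ ((1+γ)/γ)) z) ^ γ
        + (1 - (γ*t) ^ (1/(1+γ)) * (1-z) ^ (γ/(1+γ))) ^ ((1+γ)/γ) = 0) ∧
    (∀ t : ℝ, 0 < t → t < 1/γ →
      (1-γ*t) * (1-γ*t) ^ (1/γ)
          = (1 - (γ*t) ^ (1/(1+γ)) * (1-(1-γ*t)) ^ (γ/(1+γ))) ^ ((1+γ)/γ) ∧
      deriv (fun w => w * (1-γ*t) ^ (1/γ)) (1-γ*t) = (1-γ*t) ^ (1/γ) ∧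
      deriv (fun w => (1 - (γ*t) ^ (1/(1+γ)) * (1-w) ^ (γ/(1+γ))) ^ ((1+γ)/γ)) (1-γ*t)
          = (1-γ*t) ^ (1/γ)) := by
  have h1γ : (0:ℝ) < 1 + γ := by linarith
  refine ⟨?_, ?_, ?_⟩
  · -- part (a)
    intro z t hz ht ht'
    have hc : 0 < 1 - γ*t := by
      have : γ * t < 1 := by
        have := (lt_div_iff₀ hγ).mp ht'
        linarith
      linarith
    rw [(derivA_t γ z t hc).deriv,
      (show (fun w => w * (1-γ*t) ^ (1/γ)) = fun w : ℝ => w * (1-γ*t) ^ (1/γ) from rfl)]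
    rw [show deriv (fun w : ℝ => w * (1-γ*t) ^ (1/γ)) z = (1-γ*t) ^ (1/γ) from
      (by simpa using (hasDerivAt_id z).mul_const ((1-γ*t) ^ (1/γ)) : HasDerivAt _ _ z).deriv]
    rw [← Real.rpow_mul hc.le, one_div, inv_mul_cancel₀ hγ.ne', Real.rpow_one,
      Real.rpow_sub hc, Real.rpow_one]
    field_simp
    ring
  · -- part (b)
    intro z t hz ht hu
    have hP : 0 < γ*t := mul_pos hγ ht
    have hQ : 0 < 1-z := by linarith [hz.2]
    set P := γ*t with hPdef
    set Q := 1-z with hQdef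
    set u := 1 - P ^ (1/(1+γ)) * Q ^ (γ/(1+γ)) with hudef
    rw [(derivB_t γ z t hP hu.ne').deriv, (derivB_z γ z t hQ hu.ne').deriv]
    have e1 : (1+γ)/γ - 1 = 1/γ := by field_simp; ring
    rw [e1]
    -- simplify the two derivative values
    have hFt : (1+γ)/γ * u^(1/γ) * (-(1/(1+γ) * P^(1/(1+γ)-1) * γ * Q ^ (γ/(1+γ))))
        = -(u^(1/γ) * P^(1/(1+γ)-1) * Q ^ (γ/(1+γ))) := by
      field_simp
    have hGz : (1+γ)/γ * u^(1/γ) * (P ^ (1/(1+γ)) * (γ/(1+γ) * Q^(γ/(1+γ)-1)))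
        = u^(1/γ) * P ^ (1/(1+γ)) * Q^(γ/(1+γ)-1) := by
      field_simp
    rw [hFt, hGz]
    have hupos : 0 < u := hu
    have hu1 : 0 < u^(1/γ) := Real.rpow_pos_of_pos hupos _
    have hP1 : 0 < P ^ (1/(1+γ)) := Real.rpow_pos_of_pos hP _
    have hQ1 : 0 < Q^(γ/(1+γ)-1) := Real.rpow_pos_of_pos hQ _
    rw [Real.mul_rpow (by positivity) hQ1.le, Real.mul_rpow hu1.le hP1.le,
      ← Real.rpow_mul hupos.le, ← Real.rpow_mul hP.le, ← Real.rpow_mul hQ.le]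
    have E1 : u^(1/γ) * u^(1/γ*γ) = u^((1+γ)/γ) := by
      rw [← Real.rpow_add hupos]; congr 1; field_simp
    have E2 : P^(1/(1+γ)-1) * P^(1/(1+γ)*γ) = 1 := by
      rw [← Real.rpow_add hP, show (1/(1+γ)-1) + 1/(1+γ)*γ = 0 by field_simp; ring,
        Real.rpow_zero]
    have E3 : Q^(γ/(1+γ)) * Q^((γ/(1+γ)-1)*γ) = 1 := by
      rw [← Real.rpow_add hQ, show γ/(1+γ) + (γ/(1+γ)-1)*γ = 0 by field_simp; ring,
        Real.rpow_zero]
    have key : u ^ (1/γ) * u^(1/γ*γ) * (P^(1/(1+γ)-1) * P^(1/(1+γ)*γ))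
        * (Q^(γ/(1+γ)) * Q^((γ/(1+γ)-1)*γ)) = u^((1+γ)/γ) := by
      rw [E1, E2, E3, mul_one, mul_one]
    linear_combination -key
  · -- part (c)
    intro t ht ht'
    have hc : 0 < 1 - γ*t := by
      have : γ * t < 1 := by
        have := (lt_div_iff₀ hγ).mp ht'
        linarith
      linarith
    have hP : 0 < γ*t := mul_pos hγ ht
    have hsum : 1/(1+γ) + γ/(1+γ) = 1 := by field_simp
    have hucalc : 1 - (γ*t)^(1/(1+γ)) * (γ*t)^(γ/(1+γ)) = 1 - γ*t := by
      rw [← Real.rpow_add hP, hsum, Real.rpow_one]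
    refine ⟨?_, ?_, ?_⟩
    · rw [show (1:ℝ)-(1-γ*t) = γ*t by ring, hucalc,
        show (1+γ)/γ = 1 + 1/γ by field_simp; ring, Real.rpow_add hc, Real.rpow_one]
    · exact (by simpa using (hasDerivAt_id (1-γ*t)).mul_const ((1-γ*t) ^ (1/γ)) :
        HasDerivAt _ _ (1-γ*t)).deriv
    · have hz' : 0 < 1 - (1-γ*t) := by linarith
      have hne : (1 - (γ*t)^(1/(1+γ)) * (1-(1-γ*t))^(γ/(1+γ))) ≠ 0 := by
        rw [show (1:ℝ)-(1-γ*t) = γ*t by ring, hucalc]; exact hc.ne'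
      rw [(derivB_z γ (1-γ*t) t hz' hne).deriv,
        show (1:ℝ)-(1-γ*t) = γ*t by ring, hucalc,
        show (1+γ)/γ - 1 = 1/γ by field_simp; ring]
      have hPP : (γ*t)^(1/(1+γ)) * (γ*t)^(γ/(1+γ)-1) = 1 := by
        rw [← Real.rpow_add hP, show 1/(1+γ) + (γ/(1+γ)-1) = 0 by field_simp; ring,
          Real.rpow_zero]
      have heβ : (1+γ)/γ * (γ/(1+γ)) = 1 := by field_simp
      calc (1+γ)/γ * (1-γ*t)^(1/γ) * ((γ*t)^(1/(1+γ)) * (γ/(1+γ) * (γ*t)^(γ/(1+γ)-1)))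
          = ((1+γ)/γ * (γ/(1+γ))) * (1-γ*t)^(1/γ)
            * ((γ*t)^(1/(1+γ)) * (γ*t)^(γ/(1+γ)-1)) := by ring
        _ = (1-γ*t)^(1/γ) := by rw [heβ, hPP, one_mul, mul_one]
end
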